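/- Let k be a natural number and let D be an oriented graph with minimum pseudo-semidegree at least k/2. If P is a longest antidirected path in D and P has length m < k, then m is odd. -/

import Mathlib

/-- Out-degree of `v` in the digraph given by the edge relation `D`. -/
noncomputable def outDeg {V : Type*} (D : V → V → Prop) (v : V) : ℕ := {w | D v w}.ncard

/-- In-degree of `v` in the digraph given by the edge relation `D`. -/
noncomputable def inDeg {V : Type*} (D : V → V → Prop) (v : V) : ℕ := {w | D w v}.ncard

/-- `D` is an oriented graph: for each pair of vertices, at most one of the edges
`uv`, `vu` is present (in particular there are no loops). -/
def IsOriented {V : Type*} (D : V → V → Prop) : Prop := ∀ u v, D u v → ¬ D v u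

/-- The number of (directed) edges of the digraph `D`. -/
noncomputable def edgeCount {V : Type*} (D : V → V → Prop) : ℕ := {p : V × V | D p.1 p.2}.ncard

/-- The minimum pseudo-semidegree of `D` is at least `x`: `D` has an edge, and every
vertex has out-degree `0` or at least `x`, and in-degree `0` or at least `x`. -/
def PseudoGE {V : Type*} (D : V → V → Prop) (x : ℝ) : Prop :=
  (∃ u v, D u v) ∧
    ∀ v, (outDeg D v = 0 ∨ x ≤ (outDeg D v : ℝ)) ∧ (inDeg D v = 0 ∨ x ≤ (inDeg D v : ℝ))

/-- The minimum pseudo-semidegree of `D` is strictly greater than `x`. -/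
def PseudoGT {V : Type*} (D : V → V → Prop) (x : ℝ) : Prop :=
  (∃ u v, D u v) ∧
    ∀ v, (outDeg D v = 0 ∨ x < (outDeg D v : ℝ)) ∧ (inDeg D v = 0 ∨ x < (inDeg D v : ℝ))

/-- `f, g` describe an antidirected path `f 0, f 1, ..., f m` (of length `m`) in `D`:
`g i = true` iff the `i`-th edge is directed from `f i` towards `f (i+1)`, and consecutive
edges alternate in direction (equivalently, every vertex of the path has out-degree `0`
or in-degree `0` on the path). -/
def IsAntipath {V : Type*} (D : V → V → Prop) (m : ℕ) (f : ℕ → V) (g : ℕ → Bool) : Prop :=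
  Set.InjOn f (Set.Iic m) ∧
  (∀ i < m, if g i then D (f i) (f (i + 1)) else D (f (i + 1)) (f i)) ∧
  (∀ i, i + 1 < m → g i ≠ g (i + 1))

/-- `D` contains each of the (at most two) antidirected paths of length `k`:
for each initial direction `b` there is an antidirected path of length `k`
whose first edge has direction `b`. -/
def ContainsAllAntipaths {V : Type*} (D : V → V → Prop) (k : ℕ) : Prop :=
  ∀ b : Bool, ∃ f g, IsAntipath D k f g ∧ g 0 = b

/-- `f` describes an antidirected cycle of length `n` in `D`: the `i`-th edge joins
`f i` and `f (i+1)` and is directed from `f i` iff `g i = true`; every vertex `f i`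
has out-degree `0` on the cycle (i.e. `g i = false ∧ g (i-1) = true`) or in-degree `0`
on the cycle (i.e. `g i = true ∧ g (i-1) = false`). -/
def IsAnticycle {V : Type*} (D : V → V → Prop) (n : ℕ) [NeZero n] (f : ZMod n → V) : Prop :=
  3 ≤ n ∧ Function.Injective f ∧
  ∃ g : ZMod n → Bool,
    (∀ i, if g i then D (f i) (f (i + 1)) else D (f (i + 1)) (f i)) ∧
    (∀ i : ZMod n, (g i = false ∧ g (i - 1) = true) ∨ (g i = true ∧ g (i - 1) = false))

open Set

/-- parity direction function -/
def gE : ℕ → Bool := fun t => decide (Even t)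

lemma gE_even {i : ℕ} (h : Even i) : gE i = true := by simp [gE, h]

lemma gE_odd {i : ℕ} (h : Odd i) : gE i = false := by
  simp [gE, Nat.not_even_iff_odd.mpr h]

lemma gE_alt (i : ℕ) : gE i ≠ gE (i + 1) := by
  rcases Nat.even_or_odd i with h | h
  · rw [gE_even h, gE_odd (Even.add_one h)]; simp
  · rw [gE_odd h, gE_even (Odd.add_one h)]; simp

section helpers
variable {V : Type*}

lemma antipath_congr {D : V → V → Prop} {m : ℕ} {f : ℕ → V} {g g' : ℕ → Bool}
    (h : IsAntipath D m f g) (hgg : ∀ i < m, g i = g' i) : IsAntipath D m f g' := by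
  obtain ⟨hinj, hedge, halt⟩ := h
  refine ⟨hinj, ?_, ?_⟩
  · intro i hi; rw [← hgg i hi]; exact hedge i hi
  · intro i hi
    rw [← hgg i (by omega), ← hgg (i+1) hi]
    exact halt i hi

lemma antipath_flip {D : V → V → Prop} {m : ℕ} {f : ℕ → V} {g : ℕ → Bool}
    (h : IsAntipath D m f g) :
    IsAntipath (fun u v => D v u) m f (fun i => !(g i)) := by
  obtain ⟨hinj, hedge, halt⟩ := h
  refine ⟨hinj, ?_, ?_⟩
  · intro i hi
    have := hedge i hi
    cases hgi : g i <;> simp [hgi] at this ⊢ <;> exact this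
  · intro i hi hcon
    exact halt i hi (by simpa using congrArg (fun b => !b) hcon)

lemma antipath_reverse {D : V → V → Prop} {m : ℕ} {f : ℕ → V} {g : ℕ → Bool}
    (h : IsAntipath D m f g) :
    IsAntipath D m (fun t => f (m - t)) (fun t => !(g (m - 1 - t))) := by
  obtain ⟨hinj, hedge, halt⟩ := h
  refine ⟨?_, ?_, ?_⟩
  · intro s hs t ht hst
    simp only [Set.mem_Iic] at hs ht
    have := hinj (show m - s ∈ Iic m by simp) (show m - t ∈ Iic m by simp) hst
    omega
  · intro i hi
    have h1 : m - 1 - i < m := by omega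
    have := hedge (m - 1 - i) h1
    have e1 : m - 1 - i + 1 = m - i := by omega
    have e2 : m - (i + 1) = m - 1 - i := by omega
    rw [e1] at this
    cases hgi : g (m - 1 - i) <;> simp [hgi] at this ⊢ <;> rw [e2] <;> exact this
  · intro i hi hcon
    have e : m - 1 - i = (m - 1 - (i+1)) + 1 := by omega
    refine halt (m - 1 - (i + 1)) (by omega) ?_
    rw [← e]
    have := congrArg (fun b => !b) hcon
    simpa using this.symm

lemma antipath_prepend {D : V → V → Prop} {m : ℕ} (hm : 1 ≤ m) {f : ℕ → V} {g : ℕ → Bool}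
    (h : IsAntipath D m f g) (w : V) (hw : ∀ t ≤ m, f t ≠ w)
    (hedge : if g 0 then D (f 0) w else D w (f 0)) :
    IsAntipath D (m + 1) (fun t => if t = 0 then w else f (t - 1))
      (fun t => if t = 0 then !(g 0) else g (t - 1)) := by
  obtain ⟨hinj, hedges, halt⟩ := h
  refine ⟨?_, ?_, ?_⟩
  · intro s hs t ht hst
    simp only [Set.mem_Iic] at hs ht
    by_cases h0s : s = 0 <;> by_cases h0t : t = 0 <;> simp [h0s, h0t] at hst ⊢
    · exact absurd hst.symm (hw (t-1) (by omega))
    · exact absurd hst (hw (s-1) (by omega))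
    · have := hinj (show s - 1 ∈ Iic m by simp; omega) (show t - 1 ∈ Iic m by simp; omega) hst
      omega
  · intro i hi
    rcases Nat.eq_zero_or_pos i with h0 | h0
    · subst h0
      cases hg0 : g 0 <;> simp [hg0] at hedge ⊢ <;> exact hedge
    · have hne : i ≠ 0 := by omega
      have hne1 : i + 1 ≠ 0 := by omega
      have e : i + 1 - 1 = (i - 1) + 1 := by omega
      have := hedges (i - 1) (by omega)
      cases hgi : g (i - 1) <;> simp [hne, hne1, hgi, e] at this ⊢ <;> exact this
  · intro i hi
    rcases Nat.eq_zero_or_pos i with h0 | h0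
    · subst h0
      cases hg0 : g 0 <;> simp [hg0]
    · have hne : i ≠ 0 := by omega
      have hne1 : i + 1 ≠ 0 := by omega
      have e : i + 1 - 1 = (i - 1) + 1 := by omega
      have e2 : i - 1 + 1 = i := by omega
      have := halt (i - 1) (by omega)
      rw [e2] at this
      simp only [hne, hne1, if_neg, ite_false]
      rw [e, e2]
      exact this

end helpers

section helpers2
variable {V : Type*}

lemma antipath_trunc {D : V → V → Prop} {m m' : ℕ} {f : ℕ → V} {g : ℕ → Bool}
    (h : IsAntipath D m f g) (hm : m' ≤ m) : IsAntipath D m' f g := by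
  obtain ⟨hinj, hedge, halt⟩ := h
  exact ⟨hinj.mono (by intro t ht; simp at ht ⊢; omega),
    fun i hi => hedge i (by omega), fun i hi => halt i (by omega)⟩

lemma nbr_out {D : V → V → Prop} {m : ℕ} {f : ℕ → V} {g : ℕ → Bool}
    (hm : 1 ≤ m) (h : IsAntipath D m f g)
    (hlongest : ∀ m' f' g', IsAntipath D m' f' g' → m' ≤ m)
    (hg : g 0 = true) {w : V} (hDw : D (f 0) w) : ∃ t ≤ m, f t = w := by
  by_contra hcon
  push_neg at hcon
  have := hlongest (m + 1) _ _ (antipath_prepend hm h w hcon (by simp [hg]; exact hDw))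
  omega

lemma nbr_in {D : V → V → Prop} {m : ℕ} {f : ℕ → V} {g : ℕ → Bool}
    (hm : 1 ≤ m) (h : IsAntipath D m f g)
    (hlongest : ∀ m' f' g', IsAntipath D m' f' g' → m' ≤ m)
    (hg : g 0 = false) {w : V} (hDw : D w (f 0)) : ∃ t ≤ m, f t = w := by
  by_contra hcon
  push_neg at hcon
  have := hlongest (m + 1) _ _ (antipath_prepend hm h w hcon (by simp [hg]; exact hDw))
  omega

lemma two_mul_outdeg {V : Type*} [Fintype V] {D : V → V → Prop} {k m : ℕ}
    (hps : PseudoGE D ((k : ℝ) / 2)) (hmk : m < k) (hme : Even m)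
    {v w : V} (hvw : D v w) : m + 2 ≤ 2 * outDeg D v := by
  have hm0 : m % 2 = 0 := Nat.even_iff.mp hme
  have hfin : ({u | D v u} : Set V).Finite := Set.toFinite _
  have hpos : 0 < outDeg D v := (Set.ncard_pos hfin).2 ⟨w, hvw⟩
  rcases (hps.2 v).1 with h0 | h
  · omega
  · have h2 : (k : ℝ) ≤ 2 * (outDeg D v : ℝ) := by linarith
    have hk : k ≤ 2 * outDeg D v := by exact_mod_cast h2
    omega

lemma two_mul_indeg {V : Type*} [Fintype V] {D : V → V → Prop} {k m : ℕ}
    (hps : PseudoGE D ((k : ℝ) / 2)) (hmk : m < k) (hme : Even m)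
    {v w : V} (hvw : D w v) : m + 2 ≤ 2 * inDeg D v := by
  have hm0 : m % 2 = 0 := Nat.even_iff.mp hme
  have hfin : ({u | D u v} : Set V).Finite := Set.toFinite _
  have hpos : 0 < inDeg D v := (Set.ncard_pos hfin).2 ⟨w, hvw⟩
  rcases (hps.2 v).2 with h0 | h
  · omega
  · have h2 : (k : ℝ) ≤ 2 * (inDeg D v : ℝ) := by linarith
    have hk : k ≤ 2 * inDeg D v := by exact_mod_cast h2
    omega

end helpers2

section helpers3
variable {V : Type*}
open Set

lemma no_end_edge {V : Type*} [Fintype V] {D : V → V → Prop} (hor : IsOriented D)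
    {k m : ℕ} (hps : PseudoGE D ((k : ℝ) / 2)) (hmk : m < k) (hme : Even m) (hm2 : 2 ≤ m)
    {z : ℕ → V} {g : ℕ → Bool} (h : IsAntipath D m z g)
    (hlongest : ∀ m' f' g', IsAntipath D m' f' g' → m' ≤ m)
    (hg0 : g 0 = true) (hgm : g (m - 1) = false) :
    ¬ D (z 0) (z m) := by
  intro hD
  obtain ⟨hinj, hedge, halt⟩ := h
  have hm1 : 1 ≤ m := by omega
  -- truncate and prepend z m at the front
  have htrunc : IsAntipath D (m - 1) z g := antipath_trunc ⟨hinj, hedge, halt⟩ (by omega)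
  have hwne : ∀ t ≤ m - 1, z t ≠ z m := by
    intro t ht heq
    have := hinj (show t ∈ Iic m by simp; omega) (show m ∈ Iic m by simp) heq
    omega
  have hT0 := antipath_prepend (show 1 ≤ m - 1 by omega) htrunc (z m) hwne
    (by simp [hg0]; exact hD)
  rw [show m - 1 + 1 = m by omega] at hT0
  have hg'0 : (fun t => if t = 0 then !(g 0) else g (t - 1)) 0 = false := by simp [hg0]
  -- in-neighbours of z m are on the path, away from z m
  have hNin : {w | D w (z m)} ⊆ z '' (Iic (m - 1) : Set ℕ) := by
    intro w hw
    obtain ⟨t, ht, hft⟩ := nbr_in hm1 hT0 hlongest hg'0 (by simpa using hw)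
    rcases Nat.eq_zero_or_pos t with h0 | h0
    · subst h0
      simp only [if_pos rfl] at hft
      subst hft
      exact absurd hw (fun hcon => hor _ _ hcon hcon)
    · have hne : t ≠ 0 := by omega
      simp only [if_neg hne] at hft
      exact ⟨t - 1, by simp; omega, hft⟩
  -- out-neighbours of z m are on the path, away from z m
  have hrev := antipath_reverse (f := z) (g := g) ⟨hinj, hedge, halt⟩
  have hgr0 : (fun t => !(g (m - 1 - t))) 0 = true := by simp [hgm]
  have hNout : {w | D (z m) w} ⊆ z '' (Iic (m - 1) : Set ℕ) := by
    intro w hw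
    obtain ⟨t, ht, hft⟩ := nbr_out hm1 hrev hlongest hgr0
      (show D ((fun t => z (m - t)) 0) w by simpa using hw)
    rcases Nat.eq_zero_or_pos t with h0 | h0
    · subst h0
      simp only [Nat.sub_zero] at hft
      subst hft
      exact absurd hw (fun hcon => hor _ _ hcon hcon)
    · exact ⟨m - t, by simp; omega, hft⟩
  -- cardinalities
  have hSfin : (z '' (Iic (m - 1) : Set ℕ)).Finite := (Set.finite_Iic (m - 1)).image z
  have hScard : (z '' (Iic (m - 1) : Set ℕ)).ncard = m := by
    rw [Set.ncard_image_of_injOn (hinj.mono (by intro t ht; simp at ht ⊢; omega))]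
    rw [← Finset.coe_Iic, Set.ncard_coe_finset, Nat.card_Iic]
    omega
  have hdisj : Disjoint {w | D (z m) w} {w | D w (z m)} := by
    rw [Set.disjoint_left]
    intro w h1 h2
    exact hor _ _ h1 h2
  have hunion : ({w | D (z m) w} ∪ {w | D w (z m)}).ncard
      = outDeg D (z m) + inDeg D (z m) :=
    Set.ncard_union_eq hdisj (Set.toFinite _) (Set.toFinite _)
  have hle : ({w | D (z m) w} ∪ {w | D w (z m)}).ncard ≤ m :=
    le_trans (Set.ncard_le_ncard (Set.union_subset hNout hNin) hSfin) hScard.le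
  have hedgem : D (z m) (z (m - 1)) := by
    have := hedge (m - 1) (by omega)
    rw [hgm] at this
    simp only [Bool.false_eq_true, if_false] at this
    rwa [show m - 1 + 1 = m by omega] at this
  have hout := two_mul_outdeg hps hmk hme hedgem
  have hin := two_mul_indeg hps hmk hme hD
  omega

end helpers3

section helpers4
variable {V : Type*}
open Set

lemma rot_right {D : V → V → Prop} {m : ℕ} (hme : Even m) {x : ℕ → V}
    (h : IsAntipath D m x gE) {j : ℕ} (hj : Odd j) (hjm : j < m) (hD : D (x m) (x j)) :
    IsAntipath D m (fun t => if t ≤ j then x t else x (m + j + 1 - t)) gE := by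
  obtain ⟨hinj, hedge, halt⟩ := h
  have hm0 : m % 2 = 0 := Nat.even_iff.mp hme
  have hj1 : j % 2 = 1 := Nat.odd_iff.mp hj
  set w : ℕ → V := fun t => if t ≤ j then x t else x (m + j + 1 - t) with hw
  have hwle : ∀ t, t ≤ j → w t = x t := fun t ht => if_pos ht
  have hwgt : ∀ t, j < t → w t = x (m + j + 1 - t) := fun t ht => if_neg (by omega)
  refine ⟨?_, ?_, fun i _ => gE_alt i⟩
  · intro s hs t ht hst
    simp only [Set.mem_Iic] at hs ht
    by_cases h1 : s ≤ j <;> by_cases h2 : t ≤ j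
    · rw [hwle s h1, hwle t h2] at hst
      exact hinj (show s ∈ Iic m by simp; omega) (show t ∈ Iic m by simp; omega) hst
    · rw [hwle s h1, hwgt t (by omega)] at hst
      have := hinj (show s ∈ Iic m by simp; omega)
        (show m + j + 1 - t ∈ Iic m by simp; omega) hst
      omega
    · rw [hwgt s (by omega), hwle t h2] at hst
      have := hinj (show m + j + 1 - s ∈ Iic m by simp; omega)
        (show t ∈ Iic m by simp; omega) hst
      omega
    · rw [hwgt s (by omega), hwgt t (by omega)] at hst
      have := hinj (show m + j + 1 - s ∈ Iic m by simp; omega)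
        (show m + j + 1 - t ∈ Iic m by simp; omega) hst
      omega
  · intro i hi
    rcases lt_trichotomy i j with h1 | h1 | h1
    · rw [hwle i (by omega), hwle (i + 1) (by omega)]
      exact hedge i (by omega)
    · subst h1
      rw [hwle i le_rfl, hwgt (i + 1) (by omega),
        show m + i + 1 - (i + 1) = m by omega, gE_odd hj]
      simp only [Bool.false_eq_true, if_false]
      exact hD
    · rw [hwgt i (by omega), hwgt (i + 1) (by omega)]
      have hp : m + j - i < m := by omega
      have e1 : m + j + 1 - i = (m + j - i) + 1 := by omega
      have e2 : m + j + 1 - (i + 1) = m + j - i := by omega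
      rw [e1, e2]
      have := hedge (m + j - i) hp
      rcases Nat.even_or_odd i with he | he
      · have hie : i % 2 = 0 := Nat.even_iff.mp he
        rw [gE_odd (Nat.odd_iff.mpr (by omega))] at this
        simp only [Bool.false_eq_true, if_false] at this
        rw [gE_even he]
        simpa using this
      · have hie : i % 2 = 1 := Nat.odd_iff.mp he
        rw [gE_even (Nat.even_iff.mpr (by omega))] at this
        simp only [if_pos rfl] at this
        rw [gE_odd he]
        simp only [Bool.false_eq_true, if_false]
        simpa using this

end helpers4

section helpers5
variable {V : Type*}
open Set

lemma key_ineq {V : Type*} [Fintype V] {D : V → V → Prop} (hor : IsOriented D)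
    {k m : ℕ} (hps : PseudoGE D ((k : ℝ) / 2)) (hmk : m < k) (hme : Even m) (hm2 : 2 ≤ m)
    {x : ℕ → V} (hP : IsAntipath D m x gE)
    (hlongest : ∀ m' f' g', IsAntipath D m' f' g' → m' ≤ m) :
    {t | t ≤ m ∧ Odd t ∧ D (x m) (x t)}.ncard < {t | t ≤ m ∧ Odd t ∧ D (x 0) (x t)}.ncard := by
  obtain ⟨hinj, hedge, halt⟩ := hP
  have hm0 : m % 2 = 0 := Nat.even_iff.mp hme
  have hm1 : 1 ≤ m := by omega
  set A : Set ℕ := {t | t ≤ m ∧ Odd t ∧ D (x 0) (x t)} with hA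
  set B : Set ℕ := {t | t ≤ m ∧ Odd t ∧ D (x m) (x t)} with hB
  set C : Set ℕ := {t | t ≤ m ∧ Even t ∧ D (x 0) (x t)} with hC
  set SA : Set ℕ := {t | t ≤ m ∧ D (x 0) (x t)} with hSA
  set E : Set ℕ := {t | t ≤ m ∧ Even t} with hE
  have hAfin : A.Finite := (Set.finite_Iic m).subset (fun t ht => ht.1)
  have hBfin : B.Finite := (Set.finite_Iic m).subset (fun t ht => ht.1)
  have hCfin : C.Finite := (Set.finite_Iic m).subset (fun t ht => ht.1)
  have hEfin : E.Finite := (Set.finite_Iic m).subset (fun t ht => ht.1)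
  -- outDeg (x 0) = |SA|
  have hout_eq : outDeg D (x 0) = SA.ncard := by
    have hset : {w | D (x 0) w} = x '' SA := by
      ext w
      constructor
      · intro hw
        obtain ⟨t, ht, hxt⟩ := nbr_out hm1 ⟨hinj, hedge, halt⟩ hlongest
          (gE_even (Even.zero)) hw
        exact ⟨t, ⟨ht, hxt ▸ hw⟩, hxt⟩
      · rintro ⟨t, ⟨ht, hDt⟩, rfl⟩
        exact hDt
    rw [outDeg, hset,
      Set.ncard_image_of_injOn (hinj.mono (fun t ht => by simp; exact ht.1))]
  have hedge0 : D (x 0) (x 1) := by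
    have := hedge 0 hm1
    rw [gE_even Even.zero] at this
    simpa using this
  have houtdeg := two_mul_outdeg hps hmk hme hedge0
  -- SA = A ∪ C, disjoint
  have hSAsplit : SA.ncard = A.ncard + C.ncard := by
    have he : SA = A ∪ C := by
      ext t
      simp only [hSA, hA, hC, Set.mem_setOf_eq, Set.mem_union]
      constructor
      · rintro ⟨ht, hD⟩
        rcases Nat.even_or_odd t with h | h
        · exact Or.inr ⟨ht, h, hD⟩
        · exact Or.inl ⟨ht, h, hD⟩
      · rintro (⟨ht, _, hD⟩ | ⟨ht, _, hD⟩) <;> exact ⟨ht, hD⟩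
    rw [he, Set.ncard_union_eq ?_ hAfin hCfin]
    rw [Set.disjoint_left]
    rintro t ⟨_, ho, _⟩ ⟨_, he2, _⟩
    exact (Nat.not_even_iff_odd.mpr ho) he2
  -- |E| = m/2 + 1
  have hEcard : E.ncard = m / 2 + 1 := by
    have he : E = (fun r => 2 * r) '' (Set.Iic (m / 2)) := by
      ext t
      simp only [hE, Set.mem_setOf_eq, Set.mem_image, Set.mem_Iic]
      constructor
      · rintro ⟨ht, r, rfl⟩
        exact ⟨r, by omega, by omega⟩
      · rintro ⟨r, hr, rfl⟩
        exact ⟨by omega, r, by omega⟩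
    rw [he, Set.ncard_image_of_injOn (fun a _ b _ hab => by omega),
      ← Finset.coe_Iic, Set.ncard_coe_finset, Nat.card_Iic]
  -- the forbidden even slots
  set B1 : Set ℕ := (fun t => t + 1) '' B with hB1
  have hB1card : B1.ncard = B.ncard :=
    Set.ncard_image_of_injOn (fun a _ b _ hab => by omega)
  have hB1sub : B1 ⊆ E := by
    rintro t ⟨j, ⟨hjm', hjo, _⟩, rfl⟩
    have hj1 : j % 2 = 1 := Nat.odd_iff.mp hjo
    show j + 1 ≤ m ∧ Even (j + 1)
    exact ⟨by omega, Nat.even_iff.mpr (by omega)⟩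
  have h0B1 : (0 : ℕ) ∉ B1 := by
    rintro ⟨j, _, hj0⟩
    exact Nat.succ_ne_zero j hj0
  have hIsub : insert 0 B1 ⊆ E := by
    rintro t (rfl | ht)
    · exact ⟨by omega, Even.zero⟩
    · exact hB1sub ht
  have hIcard : (insert 0 B1).ncard = B.ncard + 1 := by
    rw [Set.ncard_insert_of_notMem h0B1 (hEfin.subset hB1sub), hB1card]
  -- C avoids insert 0 B1
  have hCsub : C ⊆ E \ insert 0 B1 := by
    rintro t ⟨htm, hte, htD⟩
    refine ⟨⟨htm, hte⟩, ?_⟩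
    rintro (rfl | ⟨j, ⟨hjm', hjo, hjD⟩, rfl⟩)
    · exact hor _ _ htD htD
    · -- rotation: no edge from x 0 to x (j+1)
      have htD' : D (x 0) (x (j + 1)) := htD
      have hjltm : j < m := by
        have := Nat.odd_iff.mp hjo
        omega
      have hrot := rot_right hme ⟨hinj, hedge, halt⟩ hjo hjltm hjD
      have hnoe := no_end_edge hor hps hmk hme hm2 hrot hlongest
        (gE_even Even.zero) (gE_odd (Nat.odd_iff.mpr (by omega)))
      have hj1 : 1 ≤ j := by
        have := Nat.odd_iff.mp hjo
        omega
      simp only [if_pos (show (0 : ℕ) ≤ j by omega), if_neg (show ¬ m ≤ j by omega),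
        show m + j + 1 - m = j + 1 by omega] at hnoe
      exact hnoe htD'
  -- cardinality chain
  have hdiff : (E \ insert 0 B1).ncard = E.ncard - (insert 0 B1).ncard :=
    Set.ncard_diff hIsub (hEfin.subset hIsub)
  have hCle : C.ncard ≤ (E \ insert 0 B1).ncard :=
    Set.ncard_le_ncard hCsub hEfin.diff
  have hIle : (insert 0 B1).ncard ≤ E.ncard := Set.ncard_le_ncard hIsub hEfin
  omega

end helpers5

section helpers6
variable {V : Type*}
open Set

lemma even_contra {V : Type*} [Fintype V] {D : V → V → Prop} (hor : IsOriented D)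
    {k m : ℕ} (hps : PseudoGE D ((k : ℝ) / 2)) (hmk : m < k) (hme : Even m) (hm2 : 2 ≤ m)
    {x : ℕ → V} (hP : IsAntipath D m x gE)
    (hlongest : ∀ m' f' g', IsAntipath D m' f' g' → m' ≤ m) : False := by
  have hm0 : m % 2 = 0 := Nat.even_iff.mp hme
  have h1 := key_ineq hor hps hmk hme hm2 hP hlongest
  -- reversed path
  have hPrev0 := antipath_reverse hP
  have hPrev : IsAntipath D m (fun t => x (m - t)) gE := by
    refine antipath_congr hPrev0 ?_
    intro i hi
    rcases Nat.even_or_odd i with he | he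
    · rw [gE_odd (Nat.odd_iff.mpr (by have := Nat.even_iff.mp he; omega)), gE_even he]
      simp
    · rw [gE_even (Nat.even_iff.mpr (by have := Nat.odd_iff.mp he; omega)), gE_odd he]
      simp
  have h2 := key_ineq hor hps hmk hme hm2 hPrev hlongest
  simp only [Nat.sub_self, Nat.sub_zero] at h2
  -- rewrite the two sets in h2 as reflections
  have hrefl : ∀ u v : V, {t | t ≤ m ∧ Odd t ∧ D u (x (m - t))}.ncard
      = {t | t ≤ m ∧ Odd t ∧ D u (x t)}.ncard := by
    intro u v
    have he : {t | t ≤ m ∧ Odd t ∧ D u (x (m - t))}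
        = (fun t => m - t) '' {t | t ≤ m ∧ Odd t ∧ D u (x t)} := by
      ext s
      simp only [Set.mem_setOf_eq, Set.mem_image]
      constructor
      · rintro ⟨hs, hso, hsD⟩
        have hs1 : s % 2 = 1 := Nat.odd_iff.mp hso
        exact ⟨m - s, ⟨by omega, Nat.odd_iff.mpr (by omega), hsD⟩, by omega⟩
      · rintro ⟨t, ⟨ht, hto, htD⟩, rfl⟩
        have ht1 : t % 2 = 1 := Nat.odd_iff.mp hto
        refine ⟨by omega, Nat.odd_iff.mpr (by omega), ?_⟩
        rwa [show m - (m - t) = t by omega]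
    have hinj2 : Set.InjOn (fun t => m - t) {t | t ≤ m ∧ Odd t ∧ D u (x t)} := by
      intro a ha b hb hab
      simp only [Set.mem_setOf_eq] at ha hb
      have : m - a = m - b := hab
      omega
    rw [he, Set.ncard_image_of_injOn hinj2]
  rw [hrefl (x m) (x m), hrefl (x 0) (x 0)] at h2
  omega

/-- normalize an antipath whose first edge is forward to the parity pattern -/
lemma antipath_gE {D : V → V → Prop} {m : ℕ} {x : ℕ → V} {g : ℕ → Bool}
    (h : IsAntipath D m x g) (hg0 : g 0 = true) : IsAntipath D m x gE := by
  refine antipath_congr h ?_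
  intro i hi
  induction i with
  | zero => rw [hg0, gE_even Even.zero]
  | succ n ih =>
    have h1 : g n = gE n := ih (by omega)
    have h2 : g n ≠ g (n + 1) := h.2.2 n hi
    have h3 : gE n ≠ gE (n + 1) := gE_alt n
    cases hb : g (n + 1) <;> cases hb2 : gE (n + 1) <;> simp_all

end helpers6

/-- Lemma 1: if `D` is an oriented graph of minimum pseudo-semidegree at least `k/2`
and the longest antidirected path of `D` has length `m < k`, then `m` is odd. -/
theorem stmt_4 {V : Type*} [Fintype V] (D : V → V → Prop) (hor : IsOriented D)
    (k m : ℕ) (hps : PseudoGE D ((k : ℝ) / 2))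
    (hpath : ∃ f g, IsAntipath D m f g)
    (hlongest : ∀ m' f g, IsAntipath D m' f g → m' ≤ m)
    (hmk : m < k) :
    Odd m := by
  obtain ⟨f, g, hfg⟩ := hpath
  obtain ⟨u, v, huv⟩ := hps.1
  have huv_ne : u ≠ v := by
    intro h
    subst h
    exact hor u u huv huv
  have hm1 : 1 ≤ m := by
    refine hlongest 1 (fun i => if i = 0 then u else v) (fun _ => true) ⟨?_, ?_, ?_⟩
    · intro s hs t ht hst
      simp only [Set.mem_Iic] at hs ht
      interval_cases s <;> interval_cases t <;> simp_all
    · intro i hi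
      interval_cases i
      simpa using huv
    · intro i hi
      omega
  by_contra hodd
  have hme : Even m := Nat.not_odd_iff_even.mp hodd
  have hm2 : 2 ≤ m := by
    obtain ⟨r, hr⟩ := hme
    omega
  cases hg0 : g 0 with
  | true =>
    exact even_contra hor hps hmk hme hm2 (antipath_gE hfg hg0) hlongest
  | false =>
    set D' : V → V → Prop := fun a b => D b a with hD'
    have hor' : IsOriented D' := fun a b h h' => hor b a h h'
    have hps' : PseudoGE D' ((k : ℝ) / 2) :=
      ⟨⟨v, u, huv⟩, fun w => ⟨(hps.2 w).2, (hps.2 w).1⟩⟩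
    have hlongest' : ∀ m' f' g', IsAntipath D' m' f' g' → m' ≤ m := by
      intro m' f' g' h
      exact hlongest m' f' _ (antipath_flip h)
    have hflip : IsAntipath D' m f (fun i => !(g i)) := antipath_flip hfg
    exact even_contra hor' hps' hmk hme hm2 (antipath_gE hflip (by simp [hg0])) hlongest'
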